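/- Let H be an invertible complex n×n matrix written in 2×2 block form H = [[H_k, H_o^T],[H_o, H_d]] with H_k of size k×k and H_d of size (n-k)×(n-k) invertible. Suppose ‖H_k^{-1}‖ ≤ M₁, ‖H_o‖ ≤ M₂, and ‖H_d^{-1}‖ ≤ 1/(F - M₂) for some F > M₂ + M₁M₂². Then ‖H^{-1} - [[H_k^{-1},0],[0,0]]‖ ≤ (M₁M₂ + 1)² / (F - M₂ - M₁M₂²), where ‖·‖ denotes the spectral (operator 2-)norm. -/

import Mathlib

open scoped Matrix Matrix.Norms.L2Operator

section Helpers

open Matrix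

set_option linter.unusedSectionVars false in
private lemma my_norm_one_le {a : Type*} [Fintype a] [DecidableEq a] :
    ‖(1 : Matrix a a ℂ)‖ ≤ 1 := by
  rw [Matrix.cstar_norm_def, _root_.map_one]
  exact ContinuousLinearMap.norm_id_le

private lemma my_norm_isometry {a b : Type*} [Fintype a] [Fintype b] [DecidableEq a] [DecidableEq b]
    {W : Matrix a b ℂ} (h : Wᴴ * W = 1) : ‖W‖ ≤ 1 := by
  have h1 : ‖W‖ * ‖W‖ ≤ 1 := by
    rw [← Matrix.l2_opNorm_conjTranspose_mul_self, h]
    exact my_norm_one_le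
  nlinarith [norm_nonneg W]

private lemma my_norm_le_of_mulVec {a b : Type*} [Fintype a] [Fintype b] [DecidableEq a] [DecidableEq b]
    {M : Matrix a b ℂ} {c : ℝ} (hc : 0 ≤ c)
    (h : ∀ x : EuclideanSpace ℂ b, ‖(EuclideanSpace.equiv a ℂ).symm (M *ᵥ x)‖ ≤ c * ‖x‖) :
    ‖M‖ ≤ c := by
  rw [Matrix.l2_opNorm_def]
  exact ContinuousLinearMap.opNorm_le_bound _ hc fun x => h x

private lemma my_norm_conj_le {a b : Type*} [Fintype a] [Fintype b] [DecidableEq a] [DecidableEq b]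
    (M : Matrix a b ℂ) : ‖M.map (starRingEnd ℂ)‖ ≤ ‖M‖ := by
  refine my_norm_le_of_mulVec (norm_nonneg M) fun x => ?_
  set y : EuclideanSpace ℂ b := (EuclideanSpace.equiv b ℂ).symm (fun j => starRingEnd ℂ (x j))
  have hy : ‖y‖ = ‖x‖ := by
    simp [y, EuclideanSpace.norm_eq]
  have key : (M.map (starRingEnd ℂ)) *ᵥ x = fun i => starRingEnd ℂ ((M *ᵥ y) i) := by
    funext i
    simp [Matrix.mulVec, dotProduct, map_sum, y, EuclideanSpace.equiv]
  have h2 : ‖(EuclideanSpace.equiv a ℂ).symm ((M.map (starRingEnd ℂ)) *ᵥ x)‖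
      = ‖(EuclideanSpace.equiv a ℂ).symm (M *ᵥ y)‖ := by
    rw [key]
    simp [EuclideanSpace.norm_eq, EuclideanSpace.equiv]
  rw [h2, ← hy]
  exact Matrix.l2_opNorm_mulVec M y

private lemma my_norm_transpose_le {a b : Type*} [Fintype a] [Fintype b] [DecidableEq a] [DecidableEq b]
    (M : Matrix a b ℂ) : ‖Mᵀ‖ ≤ ‖M‖ := by
  have h : Mᵀ = (Mᴴ).map (starRingEnd ℂ) := by
    ext i j; simp [Matrix.conjTranspose_apply]
  rw [h, ← Matrix.l2_opNorm_conjTranspose M]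
  exact my_norm_conj_le _

private lemma my_norm_mul3_le {a b c d : Type*} [Fintype a] [Fintype b] [Fintype c] [Fintype d]
    [DecidableEq a] [DecidableEq b] [DecidableEq c] [DecidableEq d]
    (X : Matrix a b ℂ) (Y : Matrix b c ℂ) (Z : Matrix c d ℂ) :
    ‖X * Y * Z‖ ≤ ‖X‖ * ‖Y‖ * ‖Z‖ :=
  le_trans (Matrix.l2_opNorm_mul _ _)
    (mul_le_mul_of_nonneg_right (Matrix.l2_opNorm_mul X Y) (norm_nonneg _))

variable {a b c d : Type*} [Fintype a] [Fintype b] [Fintype c] [Fintype d]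
  [DecidableEq a] [DecidableEq b] [DecidableEq c] [DecidableEq d]

set_option linter.unusedSectionVars false in
private lemma my_norm_fromRows10 : ‖(fromRows (1 : Matrix a a ℂ) (0 : Matrix b a ℂ))‖ ≤ 1 := by
  refine my_norm_isometry ?_
  rw [conjTranspose_fromRows_eq_fromCols_conjTranspose, fromCols_mul_fromRows]
  simp

set_option linter.unusedSectionVars false in
private lemma my_norm_fromRows01 : ‖(fromRows (0 : Matrix a b ℂ) (1 : Matrix b b ℂ))‖ ≤ 1 := by
  refine my_norm_isometry ?_
  rw [conjTranspose_fromRows_eq_fromCols_conjTranspose, fromCols_mul_fromRows]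
  simp

set_option linter.unusedSectionVars false in
private lemma my_corner_eq (A : Matrix a c ℂ) (B : Matrix a d ℂ) (C : Matrix b c ℂ)
    (D : Matrix b d ℂ) :
    fromBlocks A B C D =
      fromRows (1 : Matrix a a ℂ) (0 : Matrix b a ℂ) * A * (fromRows (1 : Matrix c c ℂ) (0 : Matrix d c ℂ))ᴴ
      + fromRows (1 : Matrix a a ℂ) (0 : Matrix b a ℂ) * B * (fromRows (0 : Matrix c d ℂ) (1 : Matrix d d ℂ))ᴴ
      + fromRows (0 : Matrix a b ℂ) (1 : Matrix b b ℂ) * C * (fromRows (1 : Matrix c c ℂ) (0 : Matrix d c ℂ))ᴴ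
      + fromRows (0 : Matrix a b ℂ) (1 : Matrix b b ℂ) * D * (fromRows (0 : Matrix c d ℂ) (1 : Matrix d d ℂ))ᴴ := by
  simp only [conjTranspose_fromRows_eq_fromCols_conjTranspose, conjTranspose_one,
    conjTranspose_zero, fromRows_mul, Matrix.one_mul, Matrix.zero_mul, mul_fromCols,
    Matrix.mul_one, Matrix.mul_zero, fromRows_mul_fromCols, fromBlocks_add]
  ext (i|i) (j|j) <;> simp [fromBlocks]

private lemma my_norm_fromBlocks_le (A : Matrix a c ℂ) (B : Matrix a d ℂ) (C : Matrix b c ℂ)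
    (D : Matrix b d ℂ) : ‖fromBlocks A B C D‖ ≤ ‖A‖ + ‖B‖ + ‖C‖ + ‖D‖ := by
  rw [my_corner_eq]
  have t1 := my_norm_mul3_le (fromRows (1 : Matrix a a ℂ) (0 : Matrix b a ℂ)) A
    (fromRows (1 : Matrix c c ℂ) (0 : Matrix d c ℂ))ᴴ
  have t2 := my_norm_mul3_le (fromRows (1 : Matrix a a ℂ) (0 : Matrix b a ℂ)) B
    (fromRows (0 : Matrix c d ℂ) (1 : Matrix d d ℂ))ᴴ
  have t3 := my_norm_mul3_le (fromRows (0 : Matrix a b ℂ) (1 : Matrix b b ℂ)) C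
    (fromRows (1 : Matrix c c ℂ) (0 : Matrix d c ℂ))ᴴ
  have t4 := my_norm_mul3_le (fromRows (0 : Matrix a b ℂ) (1 : Matrix b b ℂ)) D
    (fromRows (0 : Matrix c d ℂ) (1 : Matrix d d ℂ))ᴴ
  have u1 : ‖(fromRows (1 : Matrix a a ℂ) (0 : Matrix b a ℂ))‖ ≤ 1 := my_norm_fromRows10
  have u2 : ‖(fromRows (0 : Matrix a b ℂ) (1 : Matrix b b ℂ))‖ ≤ 1 := my_norm_fromRows01
  have u3 : ‖(fromRows (1 : Matrix c c ℂ) (0 : Matrix d c ℂ))ᴴ‖ ≤ 1 := by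
    rw [Matrix.l2_opNorm_conjTranspose]; exact my_norm_fromRows10
  have u4 : ‖(fromRows (0 : Matrix c d ℂ) (1 : Matrix d d ℂ))ᴴ‖ ≤ 1 := by
    rw [Matrix.l2_opNorm_conjTranspose]; exact my_norm_fromRows01
  have step : ∀ (w x y z : Matrix (a ⊕ b) (c ⊕ d) ℂ), ‖w + x + y + z‖ ≤ ‖w‖ + ‖x‖ + ‖y‖ + ‖z‖ := by
    intro w x y z
    calc ‖w + x + y + z‖ ≤ ‖w + x + y‖ + ‖z‖ := norm_add_le _ _
      _ ≤ (‖w + x‖ + ‖y‖) + ‖z‖ := by gcongr; exact norm_add_le _ _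
      _ ≤ ((‖w‖ + ‖x‖) + ‖y‖) + ‖z‖ := by gcongr; exact norm_add_le _ _
  refine (step _ _ _ _).trans ?_
  have b1 := t1.trans ((mul_le_of_le_one_right (by positivity) u3).trans
    (mul_le_of_le_one_left (norm_nonneg A) u1))
  have b2 := t2.trans ((mul_le_of_le_one_right (by positivity) u4).trans
    (mul_le_of_le_one_left (norm_nonneg B) u1))
  have b3 := t3.trans ((mul_le_of_le_one_right (by positivity) u3).trans
    (mul_le_of_le_one_left (norm_nonneg C) u2))
  have b4 := t4.trans ((mul_le_of_le_one_right (by positivity) u4).trans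
    (mul_le_of_le_one_left (norm_nonneg D) u2))
  exact add_le_add (add_le_add (add_le_add b1 b2) b3) b4

private lemma my_scalar (x M₁ M₂ G : ℝ) (hM1 : 0 ≤ M₁) (hM2 : 0 ≤ M₂)
    (hG : 0 < G) (hD : 0 < G - M₁ * M₂ ^ 2) (key : x * (G - M₁ * M₂ ^ 2) ≤ M₁ * G) :
    x * (M₂ * (1/G) * M₂) * M₁ + x * M₂ * (1/G) + (1/G) * M₂ * x
      + (1/G + (1/G) * M₂ * x * M₂ * (1/G)) ≤ (M₁ * M₂ + 1) ^ 2 / (G - M₁ * M₂ ^ 2) := by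
  rw [le_div_iff₀ hD, ← mul_le_mul_iff_of_pos_right (pow_pos hG 2)]
  have expand : (x * (M₂ * (1/G) * M₂) * M₁ + x * M₂ * (1/G) + (1/G) * M₂ * x
      + (1/G + (1/G) * M₂ * x * M₂ * (1/G))) * (G - M₁ * M₂ ^ 2) * G ^ 2
      = (x * M₁ * M₂ ^ 2 * G + 2 * x * M₂ * G + G + x * M₂ ^ 2) * (G - M₁ * M₂ ^ 2) := by
    field_simp
    ring
  rw [expand]
  nlinarith [mul_le_mul_of_nonneg_right key
    (by positivity : (0:ℝ) ≤ M₁ * M₂ ^ 2 * G + 2 * M₂ * G + M₂ ^ 2), hG, hD, hM1, hM2,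
    mul_pos hG hD]

private lemma my_inv_sub_inv {n : Type*} [Fintype n] [DecidableEq n] {X B : Matrix n n ℂ}
    (hX : IsUnit X.det) (hXB : IsUnit (X - B).det) :
    (X - B)⁻¹ - X⁻¹ = (X - B)⁻¹ * B * X⁻¹ := by
  have e1 : (X - B)⁻¹ * (X - B) * X⁻¹ = X⁻¹ := by
    rw [Matrix.nonsing_inv_mul _ hXB, Matrix.one_mul]
  rw [Matrix.mul_sub, Matrix.sub_mul, Matrix.mul_nonsing_inv_cancel_right _ _ hX] at e1
  calc (X - B)⁻¹ - X⁻¹ = (X - B)⁻¹ - ((X - B)⁻¹ - (X - B)⁻¹ * B * X⁻¹) := by rw [e1]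
    _ = (X - B)⁻¹ * B * X⁻¹ := by abel

end Helpers

/-- norm bound on the difference between the inverse of a block
matrix and the padded inverse of its top-left block. -/
theorem block_inverse_approx_bound {k m : ℕ}
    (Hk : Matrix (Fin k) (Fin k) ℂ) (Ho : Matrix (Fin m) (Fin k) ℂ)
    (Hd : Matrix (Fin m) (Fin m) ℂ) (M₁ M₂ F : ℝ)
    (hH : IsUnit (Matrix.fromBlocks Hk Hoᵀ Ho Hd))
    (hHk : IsUnit Hk) (hHd : IsUnit Hd)
    (h1 : ‖Hk⁻¹‖ ≤ M₁) (h2 : ‖Ho‖ ≤ M₂) (h3 : ‖Hd⁻¹‖ ≤ 1 / (F - M₂))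
    (hF : M₂ + M₁ * M₂ ^ 2 < F) :
    ‖(Matrix.fromBlocks Hk Hoᵀ Ho Hd)⁻¹ - Matrix.fromBlocks Hk⁻¹ 0 0 0‖ ≤
      (M₁ * M₂ + 1) ^ 2 / (F - M₂ - M₁ * M₂ ^ 2) := by
  have hM1 : 0 ≤ M₁ := le_trans (norm_nonneg _) h1
  have hM2 : 0 ≤ M₂ := le_trans (norm_nonneg _) h2
  have hG : 0 < F - M₂ := by nlinarith
  have hD : 0 < (F - M₂) - M₁ * M₂ ^ 2 := by nlinarith
  letI iHd : Invertible Hd := hHd.invertible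
  letI iH : Invertible (Matrix.fromBlocks Hk Hoᵀ Ho Hd) := hH.invertible
  letI iS0 : Invertible (Hk - Hoᵀ * ⅟Hd * Ho) :=
    Matrix.invertibleOfFromBlocks₂₂Invertible Hk Hoᵀ Ho Hd
  have hS' : Hk - Hoᵀ * ⅟Hd * Ho = Hk - Hoᵀ * Hd⁻¹ * Ho := by
    rw [Matrix.invOf_eq_nonsing_inv]
  have hSunit : IsUnit (Hk - Hoᵀ * Hd⁻¹ * Ho) := hS' ▸ (isUnit_of_invertible _)
  have hSdet : IsUnit (Hk - Hoᵀ * Hd⁻¹ * Ho).det := (Matrix.isUnit_iff_isUnit_det _).mp hSunit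
  have hKdet : IsUnit Hk.det := (Matrix.isUnit_iff_isUnit_det _).mp hHk
  have hinvH : (Matrix.fromBlocks Hk Hoᵀ Ho Hd)⁻¹ =
      Matrix.fromBlocks (Hk - Hoᵀ * Hd⁻¹ * Ho)⁻¹
        (-((Hk - Hoᵀ * Hd⁻¹ * Ho)⁻¹ * Hoᵀ * Hd⁻¹))
        (-(Hd⁻¹ * Ho * (Hk - Hoᵀ * Hd⁻¹ * Ho)⁻¹))
        (Hd⁻¹ + Hd⁻¹ * Ho * (Hk - Hoᵀ * Hd⁻¹ * Ho)⁻¹ * Hoᵀ * Hd⁻¹) := by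
    rw [← Matrix.invOf_eq_nonsing_inv, Matrix.invOf_fromBlocks₂₂_eq]
    simp only [Matrix.invOf_eq_nonsing_inv]
  have hdiff : (Matrix.fromBlocks Hk Hoᵀ Ho Hd)⁻¹ - Matrix.fromBlocks Hk⁻¹ 0 0 0 =
      Matrix.fromBlocks ((Hk - Hoᵀ * Hd⁻¹ * Ho)⁻¹ - Hk⁻¹)
        (-((Hk - Hoᵀ * Hd⁻¹ * Ho)⁻¹ * Hoᵀ * Hd⁻¹))
        (-(Hd⁻¹ * Ho * (Hk - Hoᵀ * Hd⁻¹ * Ho)⁻¹))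
        (Hd⁻¹ + Hd⁻¹ * Ho * (Hk - Hoᵀ * Hd⁻¹ * Ho)⁻¹ * Hoᵀ * Hd⁻¹) := by
    rw [hinvH]
    ext (i|i) (j|j) <;> simp [Matrix.fromBlocks]
  rw [hdiff]
  refine (my_norm_fromBlocks_le _ _ _ _).trans ?_
  -- abbreviations for bounds
  have hHoT : ‖Hoᵀ‖ ≤ M₂ := (my_norm_transpose_le Ho).trans h2
  set x : ℝ := ‖(Hk - Hoᵀ * Hd⁻¹ * Ho)⁻¹‖ with hxdef
  have hx0 : 0 ≤ x := norm_nonneg _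
  have hBb : ‖Hoᵀ * Hd⁻¹ * Ho‖ ≤ M₂ * (1/(F - M₂)) * M₂ := by
    refine (my_norm_mul3_le _ _ _).trans ?_
    have e1 : ‖Hoᵀ‖ * ‖Hd⁻¹‖ ≤ M₂ * (1/(F - M₂)) :=
      mul_le_mul hHoT h3 (norm_nonneg _) hM2
    exact mul_le_mul e1 h2 (norm_nonneg _) (by positivity)
  -- bound on top-left block
  have hid := my_inv_sub_inv (B := Hoᵀ * Hd⁻¹ * Ho) hKdet hSdet
  have T1 : ‖(Hk - Hoᵀ * Hd⁻¹ * Ho)⁻¹ - Hk⁻¹‖ ≤ x * (M₂ * (1/(F - M₂)) * M₂) * M₁ := by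
    rw [hid]
    refine (my_norm_mul3_le _ _ _).trans ?_
    exact mul_le_mul (mul_le_mul le_rfl hBb (norm_nonneg _) hx0) h1 (norm_nonneg _)
      (by positivity)
  have T2 : ‖-((Hk - Hoᵀ * Hd⁻¹ * Ho)⁻¹ * Hoᵀ * Hd⁻¹)‖ ≤ x * M₂ * (1/(F - M₂)) := by
    rw [norm_neg]
    refine (my_norm_mul3_le _ _ _).trans ?_
    exact mul_le_mul (mul_le_mul le_rfl hHoT (norm_nonneg _) hx0) h3 (norm_nonneg _)
      (by positivity)
  have T3 : ‖-(Hd⁻¹ * Ho * (Hk - Hoᵀ * Hd⁻¹ * Ho)⁻¹)‖ ≤ (1/(F - M₂)) * M₂ * x := by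
    rw [norm_neg]
    refine (my_norm_mul3_le _ _ _).trans ?_
    exact mul_le_mul (mul_le_mul h3 h2 (norm_nonneg _) (by positivity)) le_rfl (norm_nonneg _)
      (by positivity)
  have T4 : ‖Hd⁻¹ + Hd⁻¹ * Ho * (Hk - Hoᵀ * Hd⁻¹ * Ho)⁻¹ * Hoᵀ * Hd⁻¹‖ ≤
      1/(F - M₂) + (1/(F - M₂)) * M₂ * x * M₂ * (1/(F - M₂)) := by
    refine (norm_add_le _ _).trans (add_le_add h3 ?_)
    refine (my_norm_mul3_le _ _ _).trans ?_
    have inner : ‖Hd⁻¹ * Ho * (Hk - Hoᵀ * Hd⁻¹ * Ho)⁻¹‖ ≤ (1/(F - M₂)) * M₂ * x := by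
      refine (my_norm_mul3_le _ _ _).trans ?_
      exact mul_le_mul (mul_le_mul h3 h2 (norm_nonneg _) (by positivity)) le_rfl (norm_nonneg _)
        (by positivity)
    exact mul_le_mul (mul_le_mul inner hHoT (norm_nonneg _) (by positivity)) h3 (norm_nonneg _)
      (by positivity)
  -- self-bounding estimate for x
  have hself : x ≤ M₁ + x * (M₂ * (1/(F - M₂)) * M₂) * M₁ := by
    have hrepr : (Hk - Hoᵀ * Hd⁻¹ * Ho)⁻¹ =
        (Hk - Hoᵀ * Hd⁻¹ * Ho)⁻¹ * (Hoᵀ * Hd⁻¹ * Ho) * Hk⁻¹ + Hk⁻¹ :=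
      sub_eq_iff_eq_add.mp hid
    calc x = ‖(Hk - Hoᵀ * Hd⁻¹ * Ho)⁻¹ * (Hoᵀ * Hd⁻¹ * Ho) * Hk⁻¹ + Hk⁻¹‖ := by
          rw [hxdef, ← hrepr]
      _ ≤ ‖(Hk - Hoᵀ * Hd⁻¹ * Ho)⁻¹ * (Hoᵀ * Hd⁻¹ * Ho) * Hk⁻¹‖ + ‖Hk⁻¹‖ := norm_add_le _ _
      _ ≤ x * (M₂ * (1/(F - M₂)) * M₂) * M₁ + M₁ := by
          refine add_le_add ((my_norm_mul3_le _ _ _).trans ?_) h1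
          exact mul_le_mul (mul_le_mul le_rfl hBb (norm_nonneg _) hx0) h1 (norm_nonneg _)
            (by positivity)
      _ = M₁ + x * (M₂ * (1/(F - M₂)) * M₂) * M₁ := by ring
  have key : x * ((F - M₂) - M₁ * M₂ ^ 2) ≤ M₁ * (F - M₂) := by
    have hmul := mul_le_mul_of_nonneg_right hself hG.le
    have hc : (1/(F - M₂)) * (F - M₂) = 1 := one_div_mul_cancel hG.ne'
    have e : x * (M₂ * (1/(F - M₂)) * M₂) * M₁ * (F - M₂) = x * M₂ ^ 2 * M₁ := by
      calc x * (M₂ * (1/(F - M₂)) * M₂) * M₁ * (F - M₂)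
          = x * M₂ * M₂ * M₁ * ((1/(F - M₂)) * (F - M₂)) := by ring
        _ = x * M₂ ^ 2 * M₁ := by rw [hc]; ring
    nlinarith [hmul, e]
  have final := my_scalar x M₁ M₂ (F - M₂) hM1 hM2 hG hD key
  calc ‖(Hk - Hoᵀ * Hd⁻¹ * Ho)⁻¹ - Hk⁻¹‖ + ‖-((Hk - Hoᵀ * Hd⁻¹ * Ho)⁻¹ * Hoᵀ * Hd⁻¹)‖
        + ‖-(Hd⁻¹ * Ho * (Hk - Hoᵀ * Hd⁻¹ * Ho)⁻¹)‖
        + ‖Hd⁻¹ + Hd⁻¹ * Ho * (Hk - Hoᵀ * Hd⁻¹ * Ho)⁻¹ * Hoᵀ * Hd⁻¹‖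
      ≤ x * (M₂ * (1/(F - M₂)) * M₂) * M₁ + x * M₂ * (1/(F - M₂)) + (1/(F - M₂)) * M₂ * x
        + (1/(F - M₂) + (1/(F - M₂)) * M₂ * x * M₂ * (1/(F - M₂))) :=
        add_le_add (add_le_add (add_le_add T1 T2) T3) T4
    _ ≤ (M₁ * M₂ + 1) ^ 2 / (F - M₂ - M₁ * M₂ ^ 2) := final
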